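/- Let (w1,Γ1,I1) and (w2,Γ2,I2) be ordered complexes on disjoint vertex sets, let A1 be an initial segment of w1 and A2 an initial segment of w2, and let w be a shuffle of w1 and w2 such that A1 ⊔ A2 is an initial segment of w. Let ŵ and w̌ denote the restrictions of w to A1 ⊔ A2 and to (I1∖A1) ⊔ (I2∖A2), respectively. Then: (1) ((w1,Γ1) *_w (w2,Γ2)) | (A1⊔A2) = ((w1,Γ1)|A1) *_{ŵ} ((w2,Γ2)|A2); and (2) ((w1,Γ1) *_w (w2,Γ2)) / (A1⊔A2) = ((w1,Γ1)/A1) *_{w̌} ((w2,Γ2)/A2). -/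

import Mathlib

variable {α : Type*} [DecidableEq α]

/-- `Γ` is a simplicial complex on the finite ground set `E`. -/
def IsComplexOn (E : Finset α) (Γ : Set (Finset α)) : Prop :=
  (∅ : Finset α) ∈ Γ ∧ (∀ γ ∈ Γ, γ ⊆ E) ∧ ∀ γ ∈ Γ, ∀ β ⊆ γ, β ∈ Γ

/-- `φ` is a facet (maximal face) of `Γ`. -/
def IsFacetOf (Γ : Set (Finset α)) (φ : Finset α) : Prop :=
  φ ∈ Γ ∧ ∀ ψ ∈ Γ, φ ⊆ ψ → ψ = φ

/-- The restriction `Γ|S` of a simplicial complex. -/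
def restrictC (Γ : Set (Finset α)) (S : Finset α) : Set (Finset α) :=
  {γ ∈ Γ | γ ⊆ S}

/-- The link of a face `σ` in `Γ`. -/
def linkC (Γ : Set (Finset α)) (σ : Finset α) : Set (Finset α) :=
  {β | Disjoint β σ ∧ β ∪ σ ∈ Γ}

/-- The join of two simplicial complexes on disjoint vertex sets. -/
def joinC (Γ1 Γ2 : Set (Finset α)) : Set (Finset α) :=
  {γ | ∃ γ1 ∈ Γ1, ∃ γ2 ∈ Γ2, γ = γ1 ∪ γ2}

/-- Strict lexicographic order on finite subsets with respect to the linear order `w`. -/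
def lexLT (w : LinearOrder α) (s t : Finset α) : Prop :=
  ∃ m, m ∈ s ∧ m ∉ t ∧ ∀ x, w.lt x m → (x ∈ s ↔ x ∈ t)

def lexLE (w : LinearOrder α) (s t : Finset α) : Prop :=
  s = t ∨ lexLT w s t

/-- `φ` is the lexicographically minimal facet of `Γ` with respect to `w`. -/
def IsLexMinFacet (w : LinearOrder α) (Γ : Set (Finset α)) (φ : Finset α) : Prop :=
  IsFacetOf Γ φ ∧ ∀ ψ, IsFacetOf Γ ψ → lexLE w φ ψ

/-- `A` is an initial segment of the linear order `w` on the ground set `E`. -/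
def IsInitialSeg (w : LinearOrder α) (E A : Finset α) : Prop :=
  A ⊆ E ∧ ∀ x ∈ A, ∀ y ∈ E, w.le y x → y ∈ A

/-- `w` is a shuffle of `w1` and `w2` (with respect to the disjoint sets `I1`, `I2`):
it restricts to `w1` on `I1` and to `w2` on `I2`. -/
def IsShuffle (w1 w2 w : LinearOrder α) (I1 I2 : Finset α) : Prop :=
  (∀ x ∈ I1, ∀ y ∈ I1, w.le x y ↔ w1.le x y) ∧
  (∀ x ∈ I2, ∀ y ∈ I2, w.le x y ↔ w2.le x y)


section Aux

variable {α : Type*} [DecidableEq α]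

private lemma wlt_iff (w : LinearOrder α) (a b : α) : w.lt a b ↔ w.le a b ∧ ¬ w.le b a :=
  w.lt_iff_le_not_ge a b

private lemma wlt_of_le_ne (w : LinearOrder α) {a b : α} (h : w.le a b) (hne : a ≠ b) :
    w.lt a b :=
  (wlt_iff w a b).2 ⟨h, fun h' => hne (w.le_antisymm a b h h')⟩

private lemma wlt_trans_le (w : LinearOrder α) {a b c : α} (h : w.lt a b) (h' : w.le b c) :
    w.lt a c := by
  rw [wlt_iff] at h ⊢
  exact ⟨w.le_trans _ _ _ h.1 h', fun hc => h.2 (w.le_trans _ _ _ h' hc)⟩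

private lemma lexLT_asymm (w : LinearOrder α) {s t : Finset α} (h : lexLT w s t)
    (h' : lexLT w t s) : False := by
  obtain ⟨m, hms, hmt, hag⟩ := h
  obtain ⟨m', hm't, hm's, hag'⟩ := h'
  rcases w.le_total m m' with hle | hle
  · by_cases heq : m = m'
    · exact hm's (heq ▸ hms)
    · exact hmt ((hag' m (wlt_of_le_ne w hle heq)).2 hms)
  · by_cases heq : m' = m
    · exact hmt (heq ▸ hm't)
    · exact hm's ((hag m' (wlt_of_le_ne w hle heq)).2 hm't)

private lemma lexLE_antisymm (w : LinearOrder α) {s t : Finset α} (h : lexLE w s t)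
    (h' : lexLE w t s) : s = t := by
  rcases h with rfl | h
  · rfl
  · rcases h' with rfl | h'
    · rfl
    · exact absurd (lexLT_asymm w h h') not_false

private lemma join_lexLE (w1 w2 w : LinearOrder α) (I1 I2 : Finset α)
    (hdisj : Disjoint I1 I2) (hsh : IsShuffle w1 w2 w I1 I2)
    {s1 t1 s2 t2 : Finset α} (hs1 : s1 ⊆ I1) (ht1 : t1 ⊆ I1)
    (hs2 : s2 ⊆ I2) (ht2 : t2 ⊆ I2)
    (h1 : lexLE w1 s1 t1) (h2 : lexLE w2 s2 t2) :
    lexLE w (s1 ∪ s2) (t1 ∪ t2) := by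
  have hd : ∀ x ∈ I1, x ∉ I2 := fun x hx => Finset.disjoint_left.mp hdisj hx
  have hlt1 : ∀ x ∈ I1, ∀ y ∈ I1, w.lt x y → w1.lt x y := by
    intro x hx y hy h
    have h' := (wlt_iff w x y).1 h
    rw [hsh.1 x hx y hy, hsh.1 y hy x hx] at h'
    exact (wlt_iff w1 x y).2 h'
  have hlt2 : ∀ x ∈ I2, ∀ y ∈ I2, w.lt x y → w2.lt x y := by
    intro x hx y hy h
    have h' := (wlt_iff w x y).1 h
    rw [hsh.2 x hx y hy, hsh.2 y hy x hx] at h'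
    exact (wlt_iff w2 x y).2 h'
  rcases h1 with rfl | ⟨m1, hm1s, hm1t, hag1⟩
  · rcases h2 with rfl | ⟨m2, hm2s, hm2t, hag2⟩
    · exact Or.inl rfl
    · refine Or.inr ⟨m2, Finset.mem_union_right _ hm2s, ?_, ?_⟩
      · intro hmem
        rcases Finset.mem_union.mp hmem with h | h
        · exact hd _ (hs1 h) (hs2 hm2s)
        · exact hm2t h
      · intro x hx
        simp only [Finset.mem_union]
        by_cases hxI2 : x ∈ I2
        · have hx1 : x ∉ s1 := fun h => hd _ (hs1 h) hxI2
          simp only [hx1, false_or]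
          exact hag2 x (hlt2 x hxI2 m2 (hs2 hm2s) hx)
        · have h2' : x ∉ s2 := fun h => hxI2 (hs2 h)
          have h3' : x ∉ t2 := fun h => hxI2 (ht2 h)
          simp [h2', h3']
  · rcases h2 with rfl | ⟨m2, hm2s, hm2t, hag2⟩
    · refine Or.inr ⟨m1, Finset.mem_union_left _ hm1s, ?_, ?_⟩
      · intro hmem
        rcases Finset.mem_union.mp hmem with h | h
        · exact hm1t h
        · exact hd _ (hs1 hm1s) (hs2 h)
      · intro x hx
        simp only [Finset.mem_union]
        by_cases hxI1 : x ∈ I1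
        · have hx2 : x ∉ s2 := fun h => hd _ hxI1 (hs2 h)
          simp only [hx2, or_false]
          exact hag1 x (hlt1 x hxI1 m1 (hs1 hm1s) hx)
        · have h2' : x ∉ s1 := fun h => hxI1 (hs1 h)
          have h3' : x ∉ t1 := fun h => hxI1 (ht1 h)
          simp [h2', h3']
    · rcases w.le_total m1 m2 with hle | hle
      · refine Or.inr ⟨m1, Finset.mem_union_left _ hm1s, ?_, ?_⟩
        · intro hmem
          rcases Finset.mem_union.mp hmem with h | h
          · exact hm1t h
          · exact hd _ (hs1 hm1s) (ht2 h)
        · intro x hx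
          simp only [Finset.mem_union]
          by_cases hxI1 : x ∈ I1
          · have hx2 : x ∉ s2 := fun h => hd _ hxI1 (hs2 h)
            have hx2' : x ∉ t2 := fun h => hd _ hxI1 (ht2 h)
            simp only [hx2, hx2', or_false]
            exact hag1 x (hlt1 x hxI1 m1 (hs1 hm1s) hx)
          · by_cases hxI2 : x ∈ I2
            · have hx1 : x ∉ s1 := fun h => hxI1 (hs1 h)
              have hx1' : x ∉ t1 := fun h => hxI1 (ht1 h)
              simp only [hx1, hx1', false_or]
              exact hag2 x (hlt2 x hxI2 m2 (hs2 hm2s) (wlt_trans_le w hx hle))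
            · have a1 : x ∉ s1 := fun h => hxI1 (hs1 h)
              have a2 : x ∉ t1 := fun h => hxI1 (ht1 h)
              have a3 : x ∉ s2 := fun h => hxI2 (hs2 h)
              have a4 : x ∉ t2 := fun h => hxI2 (ht2 h)
              simp [a1, a2, a3, a4]
      · refine Or.inr ⟨m2, Finset.mem_union_right _ hm2s, ?_, ?_⟩
        · intro hmem
          rcases Finset.mem_union.mp hmem with h | h
          · exact hd _ (ht1 h) (hs2 hm2s)
          · exact hm2t h
        · intro x hx
          simp only [Finset.mem_union]
          by_cases hxI2 : x ∈ I2
          · have hx1 : x ∉ s1 := fun h => hd _ (hs1 h) hxI2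
            have hx1' : x ∉ t1 := fun h => hd _ (ht1 h) hxI2
            simp only [hx1, hx1', false_or]
            exact hag2 x (hlt2 x hxI2 m2 (hs2 hm2s) hx)
          · by_cases hxI1 : x ∈ I1
            · have hx2 : x ∉ s2 := fun h => hxI2 (hs2 h)
              have hx2' : x ∉ t2 := fun h => hxI2 (ht2 h)
              simp only [hx2, hx2', or_false]
              exact hag1 x (hlt1 x hxI1 m1 (hs1 hm1s) (wlt_trans_le w hx hle))
            · have a1 : x ∉ s1 := fun h => hxI1 (hs1 h)
              have a2 : x ∉ t1 := fun h => hxI1 (ht1 h)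
              have a3 : x ∉ s2 := fun h => hxI2 (hs2 h)
              have a4 : x ∉ t2 := fun h => hxI2 (ht2 h)
              simp [a1, a2, a3, a4]

end Aux

/-- Compatibility of the ordered join with initial restriction and initial contraction:
(1) `((w1,Γ1) *_w (w2,Γ2)) | (A1⊔A2) = ((w1,Γ1)|A1) *_{ŵ} ((w2,Γ2)|A2)`;
(2) `((w1,Γ1) *_w (w2,Γ2)) / (A1⊔A2) = ((w1,Γ1)/A1) *_{w̌} ((w2,Γ2)/A2)`. -/
theorem orderedJoin_restriction_contraction
    (w1 w2 w : LinearOrder α) (I1 I2 : Finset α) (Γ1 Γ2 : Set (Finset α))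
    (h1 : IsComplexOn I1 Γ1) (h2 : IsComplexOn I2 Γ2) (hdisj : Disjoint I1 I2)
    (A1 A2 : Finset α)
    (hA1 : IsInitialSeg w1 I1 A1) (hA2 : IsInitialSeg w2 I2 A2)
    (hsh : IsShuffle w1 w2 w I1 I2)
    (hA : IsInitialSeg w (I1 ∪ I2) (A1 ∪ A2)) :
    restrictC (joinC Γ1 Γ2) (A1 ∪ A2) = joinC (restrictC Γ1 A1) (restrictC Γ2 A2) ∧
    ∀ φ1 φ2 φ : Finset α,
      IsLexMinFacet w1 (restrictC Γ1 A1) φ1 →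
      IsLexMinFacet w2 (restrictC Γ2 A2) φ2 →
      IsLexMinFacet w (restrictC (joinC Γ1 Γ2) (A1 ∪ A2)) φ →
      linkC (joinC Γ1 Γ2) φ = joinC (linkC Γ1 φ1) (linkC Γ2 φ2) := by

  have hd1 : ∀ x ∈ I1, x ∉ I2 := fun x hx => Finset.disjoint_left.mp hdisj hx
  have part1 : restrictC (joinC Γ1 Γ2) (A1 ∪ A2) = joinC (restrictC Γ1 A1) (restrictC Γ2 A2) := by
    ext γ
    constructor
    · rintro ⟨⟨γ1, hγ1, γ2, hγ2, rfl⟩, hsub⟩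
      refine ⟨γ1, ⟨hγ1, ?_⟩, γ2, ⟨hγ2, ?_⟩, rfl⟩
      · intro x hx
        have hxI1 : x ∈ I1 := h1.2.1 γ1 hγ1 hx
        rcases Finset.mem_union.mp (hsub (Finset.mem_union_left _ hx)) with h | h
        · exact h
        · exact absurd (hA2.1 h) (hd1 x hxI1)
      · intro x hx
        have hxI2 : x ∈ I2 := h2.2.1 γ2 hγ2 hx
        rcases Finset.mem_union.mp (hsub (Finset.mem_union_right _ hx)) with h | h
        · exact absurd hxI2 (hd1 x (hA1.1 h))
        · exact h
    · rintro ⟨γ1, ⟨hγ1, hγ1A⟩, γ2, ⟨hγ2, hγ2A⟩, rfl⟩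
      exact ⟨⟨γ1, hγ1, γ2, hγ2, rfl⟩, Finset.union_subset_union hγ1A hγ2A⟩
  refine ⟨part1, ?_⟩
  intro φ1 φ2 φ hφ1 hφ2 hφ
  obtain ⟨⟨⟨hφ1Γ, hφ1A⟩, hφ1max⟩, hφ1min⟩ := hφ1
  obtain ⟨⟨⟨hφ2Γ, hφ2A⟩, hφ2max⟩, hφ2min⟩ := hφ2
  have hφ1I : φ1 ⊆ I1 := hφ1A.trans hA1.1
  have hφ2I : φ2 ⊆ I2 := hφ2A.trans hA2.1
  have hfac : IsFacetOf (restrictC (joinC Γ1 Γ2) (A1 ∪ A2)) (φ1 ∪ φ2) := by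
    rw [part1]
    constructor
    · exact ⟨φ1, ⟨hφ1Γ, hφ1A⟩, φ2, ⟨hφ2Γ, hφ2A⟩, rfl⟩
    · rintro ψ ⟨ψ1, ⟨hψ1Γ, hψ1A⟩, ψ2, ⟨hψ2Γ, hψ2A⟩, rfl⟩ hsub
      have hψ1I : ψ1 ⊆ I1 := hψ1A.trans hA1.1
      have hψ2I : ψ2 ⊆ I2 := hψ2A.trans hA2.1
      have e1 : ψ1 = φ1 := by
        refine hφ1max ψ1 ⟨hψ1Γ, hψ1A⟩ fun x hx => ?_
        rcases Finset.mem_union.mp (hsub (Finset.mem_union_left _ hx)) with h | h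
        · exact h
        · exact absurd (hψ2I h) (hd1 x (hφ1I hx))
      have e2 : ψ2 = φ2 := by
        refine hφ2max ψ2 ⟨hψ2Γ, hψ2A⟩ fun x hx => ?_
        rcases Finset.mem_union.mp (hsub (Finset.mem_union_right _ hx)) with h | h
        · exact absurd (hφ2I hx) (hd1 x (hψ1I h))
        · exact h
      rw [e1, e2]
  have hmin : ∀ ψ, IsFacetOf (restrictC (joinC Γ1 Γ2) (A1 ∪ A2)) ψ → lexLE w (φ1 ∪ φ2) ψ := by
    intro ψ hψ
    rw [part1] at hψ
    obtain ⟨⟨ψ1, ⟨hψ1Γ, hψ1A⟩, ψ2, ⟨hψ2Γ, hψ2A⟩, rfl⟩, hmax⟩ := hψ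
    have hψ1I : ψ1 ⊆ I1 := hψ1A.trans hA1.1
    have hψ2I : ψ2 ⊆ I2 := hψ2A.trans hA2.1
    have f1 : IsFacetOf (restrictC Γ1 A1) ψ1 := by
      refine ⟨⟨hψ1Γ, hψ1A⟩, ?_⟩
      rintro ψ1' ⟨hΓ', hA'⟩ hsub'
      have he : ψ1' ∪ ψ2 = ψ1 ∪ ψ2 :=
        hmax (ψ1' ∪ ψ2) ⟨ψ1', ⟨hΓ', hA'⟩, ψ2, ⟨hψ2Γ, hψ2A⟩, rfl⟩
          (Finset.union_subset_union hsub' (Finset.Subset.refl _))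
      refine Finset.Subset.antisymm (fun x hx => ?_) hsub'
      have hx2 : x ∈ ψ1 ∪ ψ2 := he ▸ Finset.mem_union_left _ hx
      rcases Finset.mem_union.mp hx2 with h | h
      · exact h
      · exact absurd (hψ2I h) (hd1 x (hA'.trans hA1.1 hx))
    have f2 : IsFacetOf (restrictC Γ2 A2) ψ2 := by
      refine ⟨⟨hψ2Γ, hψ2A⟩, ?_⟩
      rintro ψ2' ⟨hΓ', hA'⟩ hsub'
      have he : ψ1 ∪ ψ2' = ψ1 ∪ ψ2 :=
        hmax (ψ1 ∪ ψ2') ⟨ψ1, ⟨hψ1Γ, hψ1A⟩, ψ2', ⟨hΓ', hA'⟩, rfl⟩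
          (Finset.union_subset_union (Finset.Subset.refl _) hsub')
      refine Finset.Subset.antisymm (fun x hx => ?_) hsub'
      have hx2 : x ∈ ψ1 ∪ ψ2 := he ▸ Finset.mem_union_right _ hx
      rcases Finset.mem_union.mp hx2 with h | h
      · exact absurd (hA'.trans hA2.1 hx) (hd1 x (hψ1I h))
      · exact h
    exact join_lexLE w1 w2 w I1 I2 hdisj hsh hφ1I hψ1I hφ2I hψ2I
      (hφ1min ψ1 f1) (hφ2min ψ2 f2)
  have hφeq : φ = φ1 ∪ φ2 :=
    lexLE_antisymm w (hφ.2 (φ1 ∪ φ2) hfac) (hmin φ hφ.1)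
  subst hφeq
  ext β
  constructor
  · rintro ⟨hdβ, hb⟩
    obtain ⟨γ1, hγ1, γ2, hγ2, heq⟩ := hb
    have hγ1I : γ1 ⊆ I1 := h1.2.1 γ1 hγ1
    have hγ2I : γ2 ⊆ I2 := h2.2.1 γ2 hγ2
    have e1 : (β ∩ I1) ∪ φ1 = γ1 := by
      ext x
      have hx := Finset.ext_iff.mp heq x
      simp only [Finset.mem_union, Finset.mem_inter] at hx ⊢
      constructor
      · rintro (⟨hβ, hI⟩ | hφ')
        · rcases hx.1 (Or.inl hβ) with h | h
          · exact h
          · exact absurd (hγ2I h) (hd1 x hI)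
        · rcases hx.1 (Or.inr (Or.inl hφ')) with h | h
          · exact h
          · exact absurd (hγ2I h) (hd1 x (hφ1I hφ'))
      · intro hγ
        have hxI : x ∈ I1 := hγ1I hγ
        rcases hx.2 (Or.inl hγ) with h | h | h
        · exact Or.inl ⟨h, hxI⟩
        · exact Or.inr h
        · exact absurd (hφ2I h) (hd1 x hxI)
    have e2 : (β ∩ I2) ∪ φ2 = γ2 := by
      ext x
      have hx := Finset.ext_iff.mp heq x
      simp only [Finset.mem_union, Finset.mem_inter] at hx ⊢
      constructor
      · rintro (⟨hβ, hI⟩ | hφ')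
        · rcases hx.1 (Or.inl hβ) with h | h
          · exact absurd hI (hd1 x (hγ1I h))
          · exact h
        · rcases hx.1 (Or.inr (Or.inr hφ')) with h | h
          · exact absurd (hφ2I hφ') (hd1 x (hγ1I h))
          · exact h
      · intro hγ
        have hxI : x ∈ I2 := hγ2I hγ
        rcases hx.2 (Or.inr hγ) with h | h | h
        · exact Or.inl ⟨h, hxI⟩
        · exact absurd hxI (hd1 x (hφ1I h))
        · exact Or.inr h
    have eβ : β = (β ∩ I1) ∪ (β ∩ I2) := by
      ext x
      simp only [Finset.mem_union, Finset.mem_inter]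
      constructor
      · intro hβ
        have hx : x ∈ γ1 ∪ γ2 := heq ▸ Finset.mem_union_left _ hβ
        rcases Finset.mem_union.mp hx with h | h
        · exact Or.inl ⟨hβ, hγ1I h⟩
        · exact Or.inr ⟨hβ, hγ2I h⟩
      · rintro (⟨h, _⟩ | ⟨h, _⟩) <;> exact h
    refine ⟨β ∩ I1, ⟨?_, e1 ▸ hγ1⟩, β ∩ I2, ⟨?_, e2 ▸ hγ2⟩, eβ⟩
    · exact Finset.disjoint_left.mpr fun x hx hx' =>
        Finset.disjoint_left.mp hdβ (Finset.mem_inter.mp hx).1 (Finset.mem_union_left _ hx')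
    · exact Finset.disjoint_left.mpr fun x hx hx' =>
        Finset.disjoint_left.mp hdβ (Finset.mem_inter.mp hx).1 (Finset.mem_union_right _ hx')
  · rintro ⟨β1, ⟨hdβ1, hm1⟩, β2, ⟨hdβ2, hm2⟩, rfl⟩
    have hβ1I : β1 ⊆ I1 := Finset.subset_union_left.trans (h1.2.1 _ hm1)
    have hβ2I : β2 ⊆ I2 := Finset.subset_union_left.trans (h2.2.1 _ hm2)
    refine ⟨Finset.disjoint_left.mpr fun x hx hx' => ?_,
      β1 ∪ φ1, hm1, β2 ∪ φ2, hm2, Finset.union_union_union_comm β1 β2 φ1 φ2⟩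
    rcases Finset.mem_union.mp hx with hβ | hβ <;> rcases Finset.mem_union.mp hx' with hφ' | hφ'
    · exact Finset.disjoint_left.mp hdβ1 hβ hφ'
    · exact hd1 x (hβ1I hβ) (hφ2I hφ')
    · exact hd1 x (hφ1I hφ') (hβ2I hβ)
    · exact Finset.disjoint_left.mp hdβ2 hβ hφ'
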